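/- Let V be a real Banach space, H a real Hilbert space, e : V → H a continuous linear map, and j : V → V* defined by j(x)(v) := (e v, e x)_H. Let a < b be reals, p ∈ [2, ∞), q = p/(p−1), α ≥ 1, and let A : [a, b] × V → V* be such that for each x ∈ V the map s ↦ A(s, x) is Bochner integrable on [a, b]. Let λ, K₂ : [a, b] → [0, ∞) be Lebesgue integrable and suppose that for almost every s ∈ [a, b] and all x ∈ V: ‖A(s, x)‖_{V*}^q ≤ α λ(s)^q ‖x‖_V^p + λ(s)^{q−1} K₂(s). Define D(x) := j(x) − ∫_a^b A(s, x) ds. Then there exists a constant C > 0 such that ‖D(x)‖_{V*} ≤ C(1 + ‖x‖_V^{p−1}) for all x ∈ V. -/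

import Mathlib

open MeasureTheory

/-- Subadditivity of `rpow` for exponents in `[0,1]`. -/
lemma aux_rpow_add_le {u v r : ℝ} (hu : 0 ≤ u) (hv : 0 ≤ v) (h0 : 0 ≤ r) (h1 : r ≤ 1) :
    (u + v) ^ r ≤ u ^ r + v ^ r := by
  lift u to NNReal using hu
  lift v to NNReal using hv
  rw [← NNReal.coe_add, ← NNReal.coe_rpow, ← NNReal.coe_rpow, ← NNReal.coe_rpow,
    ← NNReal.coe_add, NNReal.coe_le_coe]
  exact NNReal.rpow_add_le_add_rpow u v h0 h1

/-- Growth estimate for the operator `D(x) = j(x) − ∫_a^b A(s,x) ds` arising in the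
implicit time-discretization scheme (proof of Theorem 2.7). -/
theorem stmt_11
    {V H : Type*} [NormedAddCommGroup V] [NormedSpace ℝ V]
    [NormedAddCommGroup H] [InnerProductSpace ℝ H]
    (e : V →L[ℝ] H)
    (j : V → V →L[ℝ] ℝ) (hj : ∀ x v : V, j x v = (inner ℝ (e v) (e x) : ℝ))
    (a b : ℝ) (hab : a < b)
    (p q α : ℝ) (hp : 2 ≤ p) (hq : q = p / (p - 1)) (hα : 1 ≤ α)
    (A : ℝ → V → V →L[ℝ] ℝ)
    (hint : ∀ x : V, IntegrableOn (fun s => A s x) (Set.Icc a b))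
    (lam K₂ : ℝ → ℝ)
    (hlam_nonneg : ∀ s, 0 ≤ lam s) (hK₂_nonneg : ∀ s, 0 ≤ K₂ s)
    (hlam_int : IntegrableOn lam (Set.Icc a b))
    (hK₂_int : IntegrableOn K₂ (Set.Icc a b))
    (hgrowth : ∀ᵐ s ∂(volume.restrict (Set.Icc a b)), ∀ x : V,
      ‖A s x‖ ^ q ≤ α * lam s ^ q * ‖x‖ ^ p + lam s ^ (q - 1) * K₂ s) :
    ∃ C : ℝ, 0 < C ∧ ∀ x : V,
      ‖j x - ∫ s in Set.Icc a b, A s x‖ ≤ C * (1 + ‖x‖ ^ (p - 1)) := by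
  have hp1 : (1 : ℝ) < p := lt_of_lt_of_le one_lt_two hp
  have hpq : p.HolderConjugate q := (Real.holderConjugate_iff_eq_conjExponent hp1).2 hq
  have hq1 : 1 < q := hpq.symm.lt
  have hq0 : 0 < q := hpq.symm.pos
  have hα0 : 0 ≤ α := le_trans zero_le_one hα
  have hαq : 0 ≤ α ^ (1 / q) := Real.rpow_nonneg hα0 _
  have hp0 : p ≠ 0 := by positivity
  have hpm1 : p - 1 ≠ 0 := by intro h; rw [sub_eq_zero] at h; linarith
  have hpq' : p * (1 / q) = p - 1 := by
    rw [hq]; field_simp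
  have hqp' : (q - 1) * (1 / q) = 1 / p := by
    rw [hq]; field_simp; ring
  set L := ∫ s in Set.Icc a b, lam s with hL
  set K := ∫ s in Set.Icc a b, K₂ s with hK
  have hL0 : 0 ≤ L := integral_nonneg fun s => hlam_nonneg s
  have hK0 : 0 ≤ K := integral_nonneg fun s => hK₂_nonneg s
  have hC : 0 < ‖e‖ ^ 2 + α ^ (1 / q) * L + L + K + 1 := by
    nlinarith [sq_nonneg ‖e‖, mul_nonneg hαq hL0]
  refine ⟨‖e‖ ^ 2 + α ^ (1 / q) * L + L + K + 1, hC, fun x => ?_⟩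
  -- norm of j x
  have hje : ‖j x‖ ≤ ‖e‖ ^ 2 * ‖x‖ := by
    refine ContinuousLinearMap.opNorm_le_bound _ (by positivity) fun v => ?_
    rw [hj, Real.norm_eq_abs]
    calc |(inner ℝ (e v) (e x) : ℝ)| ≤ ‖e v‖ * ‖e x‖ := abs_real_inner_le_norm _ _
      _ ≤ (‖e‖ * ‖v‖) * (‖e‖ * ‖x‖) :=
          mul_le_mul (e.le_opNorm v) (e.le_opNorm x) (norm_nonneg _) (by positivity)
      _ = ‖e‖ ^ 2 * ‖x‖ * ‖v‖ := by ring
  -- pointwise bound on ‖A s x‖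
  have hpt : ∀ᵐ s ∂(volume.restrict (Set.Icc a b)),
      ‖A s x‖ ≤ α ^ (1 / q) * lam s * ‖x‖ ^ (p - 1) + (lam s + K₂ s) := by
    filter_upwards [hgrowth] with s hs
    have h1 : ‖A s x‖ = (‖A s x‖ ^ q) ^ (1 / q) := by
      rw [← Real.rpow_mul (norm_nonneg _), mul_one_div, div_self hq0.ne', Real.rpow_one]
    have hA0 : 0 ≤ α * lam s ^ q * ‖x‖ ^ p :=
      mul_nonneg (mul_nonneg hα0 (Real.rpow_nonneg (hlam_nonneg s) _))
        (Real.rpow_nonneg (norm_nonneg _) _)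
    have hB0 : 0 ≤ lam s ^ (q - 1) * K₂ s :=
      mul_nonneg (Real.rpow_nonneg (hlam_nonneg s) _) (hK₂_nonneg s)
    have h2 : (‖A s x‖ ^ q) ^ (1 / q) ≤
        (α * lam s ^ q * ‖x‖ ^ p + lam s ^ (q - 1) * K₂ s) ^ (1 / q) :=
      Real.rpow_le_rpow (Real.rpow_nonneg (norm_nonneg _) _) (hs x) (by positivity)
    have h3 : (α * lam s ^ q * ‖x‖ ^ p + lam s ^ (q - 1) * K₂ s) ^ (1 / q) ≤
        (α * lam s ^ q * ‖x‖ ^ p) ^ (1 / q) + (lam s ^ (q - 1) * K₂ s) ^ (1 / q) :=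
      aux_rpow_add_le hA0 hB0 (by positivity) (by rw [div_le_one hq0]; linarith)
    have hA' : (α * lam s ^ q * ‖x‖ ^ p) ^ (1 / q) = α ^ (1 / q) * lam s * ‖x‖ ^ (p - 1) := by
      rw [Real.mul_rpow (mul_nonneg hα0 (Real.rpow_nonneg (hlam_nonneg s) _))
          (Real.rpow_nonneg (norm_nonneg _) _),
        Real.mul_rpow hα0 (Real.rpow_nonneg (hlam_nonneg s) _),
        ← Real.rpow_mul (hlam_nonneg s), ← Real.rpow_mul (norm_nonneg x),
        mul_one_div, div_self hq0.ne', Real.rpow_one, hpq']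
    have hB' : (lam s ^ (q - 1) * K₂ s) ^ (1 / q) ≤ lam s + K₂ s := by
      rw [Real.mul_rpow (Real.rpow_nonneg (hlam_nonneg s) _) (hK₂_nonneg s),
        ← Real.rpow_mul (hlam_nonneg s), hqp']
      have e1 : (lam s ^ (1 / p)) ^ p = lam s := by
        rw [← Real.rpow_mul (hlam_nonneg s), one_div_mul_cancel hpq.ne_zero, Real.rpow_one]
      have e2 : (K₂ s ^ (1 / q)) ^ q = K₂ s := by
        rw [← Real.rpow_mul (hK₂_nonneg s), one_div_mul_cancel hq0.ne', Real.rpow_one]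
      have hy' := Real.young_inequality_of_nonneg
        (Real.rpow_nonneg (hlam_nonneg s) (1 / p)) (Real.rpow_nonneg (hK₂_nonneg s) (1 / q)) hpq
      rw [e1, e2] at hy'
      have d1 : lam s / p ≤ lam s := div_le_self (hlam_nonneg s) (le_of_lt hpq.lt)
      have d2 : K₂ s / q ≤ K₂ s := div_le_self (hK₂_nonneg s) (le_of_lt hq1)
      linarith
    rw [h1]
    calc (‖A s x‖ ^ q) ^ (1 / q) ≤ _ := h2
      _ ≤ _ := h3
      _ ≤ α ^ (1 / q) * lam s * ‖x‖ ^ (p - 1) + (lam s + K₂ s) := by rw [hA']; linarith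
  -- integrate
  have hAx_int : Integrable (fun s => ‖A s x‖) (volume.restrict (Set.Icc a b)) := (hint x).norm
  have hG1 : Integrable (fun s => α ^ (1 / q) * lam s * ‖x‖ ^ (p - 1))
      (volume.restrict (Set.Icc a b)) := by
    have := (hlam_int.const_mul (α ^ (1 / q))).mul_const (‖x‖ ^ (p - 1))
    simpa [mul_assoc, mul_comm, mul_left_comm] using this
  have hG2 : Integrable (fun s => lam s + K₂ s) (volume.restrict (Set.Icc a b)) :=
    hlam_int.add hK₂_int
  have hInt1 : ∫ s in Set.Icc a b, ‖A s x‖ ≤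
      ∫ s in Set.Icc a b, (α ^ (1 / q) * lam s * ‖x‖ ^ (p - 1) + (lam s + K₂ s)) :=
    integral_mono_ae hAx_int (hG1.add hG2) hpt
  have hInt2 : ∫ s in Set.Icc a b, (α ^ (1 / q) * lam s * ‖x‖ ^ (p - 1) + (lam s + K₂ s))
      = α ^ (1 / q) * ‖x‖ ^ (p - 1) * L + (L + K) := by
    have h : (fun s => α ^ (1 / q) * lam s * ‖x‖ ^ (p - 1) + (lam s + K₂ s))
        = fun s => (α ^ (1 / q) * ‖x‖ ^ (p - 1)) * lam s + (lam s + K₂ s) := by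
      funext s; ring
    rw [h, integral_add (hlam_int.const_mul _) hG2, integral_const_mul,
      integral_add hlam_int hK₂_int]
  have hnormint : ‖∫ s in Set.Icc a b, A s x‖ ≤ ∫ s in Set.Icc a b, ‖A s x‖ :=
    norm_integral_le_integral_norm _
  have ht0 : 0 ≤ ‖x‖ ^ (p - 1) := Real.rpow_nonneg (norm_nonneg x) _
  have hx1 : ‖x‖ ≤ 1 + ‖x‖ ^ (p - 1) := by
    rcases le_total ‖x‖ 1 with h | h
    · linarith
    · have h2 := Real.rpow_le_rpow_of_exponent_le h (show (1 : ℝ) ≤ p - 1 by linarith)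
      rw [Real.rpow_one] at h2
      linarith
  have htri : ‖j x - ∫ s in Set.Icc a b, A s x‖ ≤ ‖j x‖ + ‖∫ s in Set.Icc a b, A s x‖ :=
    norm_sub_le _ _
  nlinarith [mul_le_mul_of_nonneg_left hx1 (sq_nonneg ‖e‖), mul_nonneg hαq hL0,
    mul_nonneg (mul_nonneg hαq hL0) ht0, mul_nonneg hL0 ht0, mul_nonneg hK0 ht0,
    sq_nonneg ‖e‖]
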